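/- Let a, n ≥ 1. Let T be a tree which is 2^{a−1}·n-good from a string α, and let P_1, …, P_a be sets of strings such that T ⊆ P_1 ∪ … ∪ P_a. Then for some i with 1 ≤ i ≤ a, T has a subset which is n-good from α for P_i. -/
import Mathlib


/-- A *tree*: a finite set of pairwise incomparable strings (antichain under
the prefix/extension order), where a string is a finite sequence of naturals. -/
def IsTree (T : Finset (List ℕ)) : Prop :=
  ∀ σ ∈ T, ∀ τ ∈ T, σ <+: τ → σ = τ

/-- `T` is `a`-good from `σ`: `T` is nonempty, every string in `T` extends `σ`,
and for every `τ` with `σ ⊆ τ ⊊ ρ` for some `ρ ∈ T`, at least `a` immediate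
successors `τ*k` of `τ` are initial segments of elements of `T`. -/
def GoodFrom (a : ℕ) (T : Finset (List ℕ)) (σ : List ℕ) : Prop :=
  T.Nonempty ∧ (∀ ρ ∈ T, σ <+: ρ) ∧
    ∀ τ : List ℕ, (∃ ρ ∈ T, σ <+: τ ∧ τ <+: ρ ∧ τ ≠ ρ) →
      a ≤ {k : ℕ | ∃ ρ ∈ T, τ ++ [k] <+: ρ}.ncard

/-- `T` is `a`-good from `σ` for `P`: in addition `T ⊆ P`. -/
def GoodFromFor (a : ℕ) (T : Finset (List ℕ)) (σ : List ℕ) (P : Set (List ℕ)) : Prop :=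
  GoodFrom a T σ ∧ ↑T ⊆ P

lemma getElem?_of_succ_prefix {τ ρ : List ℕ} {k : ℕ} (h : τ ++ [k] <+: ρ) :
    ρ[τ.length]? = some k := by
  obtain ⟨s, rfl⟩ := h
  rw [List.append_assoc, List.getElem?_append_right le_rfl]
  simp

lemma succSet_finite (S : Finset (List ℕ)) (τ : List ℕ) :
    {k : ℕ | ∃ ρ ∈ S, τ ++ [k] <+: ρ}.Finite := by
  apply Set.Finite.subset (S.finite_toSet.image (fun ρ => (ρ[τ.length]?).getD 0))
  rintro k ⟨ρ, hρ, hpre⟩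
  exact ⟨ρ, hρ, by show ρ[τ.length]?.getD 0 = k; rw [getElem?_of_succ_prefix hpre]; rfl⟩

lemma goodFrom_mono {a b : ℕ} (hab : a ≤ b) {T : Finset (List ℕ)} {σ : List ℕ}
    (h : GoodFrom b T σ) : GoodFrom a T σ :=
  ⟨h.1, h.2.1, fun τ hτ => le_trans hab (h.2.2 τ hτ)⟩

lemma combine (n : ℕ) (hn : 1 ≤ n) (T : Finset (List ℕ)) (τ : List ℕ) (P : Set (List ℕ))
    (K : Finset ℕ) (hK : n ≤ K.card)
    (hk : ∀ k ∈ K, ∃ S ⊆ T, GoodFromFor n S (τ ++ [k]) P) :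
    ∃ S ⊆ T, GoodFromFor n S τ P := by
  choose! g hgT hggood using hk
  refine ⟨K.biUnion g, ?_, ⟨?_, ?_, ?_⟩, ?_⟩
  · intro ρ hρ
    obtain ⟨k, hkK, hρk⟩ := Finset.mem_biUnion.1 hρ
    exact hgT k hkK hρk
  · -- nonempty
    obtain ⟨k, hkK⟩ := Finset.card_pos.1 (lt_of_lt_of_le hn hK)
    obtain ⟨ρ, hρ⟩ := (hggood k hkK).1.1
    exact ⟨ρ, Finset.mem_biUnion.2 ⟨k, hkK, hρ⟩⟩
  · -- extends τ
    intro ρ hρ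
    obtain ⟨k, hkK, hρk⟩ := Finset.mem_biUnion.1 hρ
    exact (List.prefix_append τ [k]).trans ((hggood k hkK).1.2.1 ρ hρk)
  · -- successor condition
    rintro τ' ⟨ρ, hρS, hττ', hτ'ρ, hne⟩
    obtain ⟨s, rfl⟩ := hττ'
    obtain ⟨k', hk'K, hρk'⟩ := Finset.mem_biUnion.1 hρS
    match s with
    | [] =>
      -- τ' = τ, the successors include all of K
      have hsub : (↑K : Set ℕ) ⊆ {k : ℕ | ∃ ρ ∈ K.biUnion g, (τ ++ []) ++ [k] <+: ρ} := by
        intro k hkK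
        obtain ⟨ρ₀, hρ₀⟩ := (hggood k hkK).1.1
        refine ⟨ρ₀, Finset.mem_biUnion.2 ⟨k, hkK, hρ₀⟩, ?_⟩
        simpa using (hggood k hkK).1.2.1 ρ₀ hρ₀
      calc n ≤ K.card := hK
        _ = (↑K : Set ℕ).ncard := (Set.ncard_coe_finset K).symm
        _ ≤ _ := Set.ncard_le_ncard hsub (succSet_finite _ _)
    | k₀ :: s' =>
      -- τ' properly extends τ, starting with successor k₀; then k₀ = k'
      have hpre₀ : τ ++ [k₀] <+: ρ := by
        refine List.IsPrefix.trans ⟨s', by simp⟩ hτ'ρ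
      have hpre' : τ ++ [k'] <+: ρ := (hggood k' hk'K).1.2.1 ρ hρk'
      have hkk : k₀ = k' := by
        have := (List.prefix_of_prefix_length_le hpre₀ hpre' (by simp)).eq_of_length
          (by simp)
        simpa using this
      subst hkk
      have hmain := (hggood k₀ hk'K).1.2.2 (τ ++ k₀ :: s')
        ⟨ρ, hρk', ⟨s', by simp⟩, hτ'ρ, hne⟩
      refine hmain.trans (Set.ncard_le_ncard ?_ (succSet_finite _ _))
      rintro k ⟨ρ₁, hρ₁, hp⟩
      exact ⟨ρ₁, Finset.mem_biUnion.2 ⟨k₀, hk'K, hρ₁⟩, hp⟩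
  · -- subset of P
    intro ρ hρ
    obtain ⟨k, hkK, hρk⟩ := Finset.mem_biUnion.1 hρ
    exact (hggood k hkK).2 hρk

lemma rich_lemma (n : ℕ) (hn : 1 ≤ n) (T : Finset (List ℕ)) (α : List ℕ)
    (hgood : GoodFrom (2 * n) T α) (P Q : Set (List ℕ)) (hcov : ↑T ⊆ P ∪ Q) :
    ∀ m : ℕ, ∀ τ : List ℕ, T.sup List.length ≤ τ.length + m → α <+: τ →
      (∃ ρ ∈ T, τ <+: ρ) →
      (∃ S ⊆ T, GoodFromFor n S τ P) ∨ (∃ S ⊆ T, GoodFromFor n S τ Q) := by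
  intro m
  induction m with
  | zero =>
    intro τ hlen hα ⟨ρ, hρT, hpre⟩
    have hτρ : τ = ρ := by
      have h1 : ρ.length ≤ τ.length := le_trans (Finset.le_sup hρT) (by simpa using hlen)
      exact hpre.eq_of_length (le_antisymm hpre.length_le h1)
    subst hτρ
    have hsingle : GoodFrom n {τ} τ := by
      refine ⟨⟨τ, Finset.mem_singleton_self τ⟩, ?_, ?_⟩
      · intro ρ hρ; rw [Finset.mem_singleton.1 hρ]
      · rintro τ' ⟨ρ', hρ', hττ', hτ'ρ', hne⟩
        rw [Finset.mem_singleton.1 hρ'] at hτ'ρ' hne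
        exact absurd (hτ'ρ'.eq_of_length (le_antisymm hτ'ρ'.length_le hττ'.length_le)) hne
    rcases hcov hρT with hP | hQ
    · exact Or.inl ⟨{τ}, Finset.singleton_subset_iff.2 hρT, hsingle, by simpa using hP⟩
    · exact Or.inr ⟨{τ}, Finset.singleton_subset_iff.2 hρT, hsingle, by simpa using hQ⟩
  | succ m ih =>
    intro τ hlen hα ⟨ρ, hρT, hpre⟩
    by_cases hτT : τ ∈ T
    · have hsingle : GoodFrom n {τ} τ := by
        refine ⟨⟨τ, Finset.mem_singleton_self τ⟩, ?_, ?_⟩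
        · intro ρ' hρ'; rw [Finset.mem_singleton.1 hρ']
        · rintro τ' ⟨ρ', hρ', hττ', hτ'ρ', hne⟩
          rw [Finset.mem_singleton.1 hρ'] at hτ'ρ' hne
          exact absurd (hτ'ρ'.eq_of_length (le_antisymm hτ'ρ'.length_le hττ'.length_le)) hne
      rcases hcov hτT with hP | hQ
      · exact Or.inl ⟨{τ}, Finset.singleton_subset_iff.2 hτT, hsingle, by simpa using hP⟩
      · exact Or.inr ⟨{τ}, Finset.singleton_subset_iff.2 hτT, hsingle, by simpa using hQ⟩
    · have hne : τ ≠ ρ := fun h => hτT (h ▸ hρT)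
      have hK := hgood.2.2 τ ⟨ρ, hρT, hα, hpre, hne⟩
      set K : Set ℕ := {k : ℕ | ∃ ρ ∈ T, τ ++ [k] <+: ρ} with hKdef
      have hKfin : K.Finite := succSet_finite T τ
      -- every successor is rich for P or Q
      have hsucc : ∀ k ∈ K, (∃ S ⊆ T, GoodFromFor n S (τ ++ [k]) P) ∨
          (∃ S ⊆ T, GoodFromFor n S (τ ++ [k]) Q) := by
        rintro k ⟨ρ', hρ', hp⟩
        refine ih (τ ++ [k]) ?_ (hα.trans (List.prefix_append τ [k])) ⟨ρ', hρ', hp⟩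
        simp only [List.length_append, List.length_singleton]
        omega
      set KP : Set ℕ := {k ∈ K | ∃ S ⊆ T, GoodFromFor n S (τ ++ [k]) P} with hKP
      set KQ : Set ℕ := {k ∈ K | ∃ S ⊆ T, GoodFromFor n S (τ ++ [k]) Q} with hKQ
      have hKPfin : KP.Finite := hKfin.subset (fun k hk => hk.1)
      have hKQfin : KQ.Finite := hKfin.subset (fun k hk => hk.1)
      have hunion : K ⊆ KP ∪ KQ := by
        intro k hk
        rcases hsucc k hk with h | h
        · exact Or.inl ⟨hk, h⟩
        · exact Or.inr ⟨hk, h⟩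
      have hcount : 2 * n ≤ KP.ncard + KQ.ncard := by
        calc 2 * n ≤ K.ncard := hK
          _ ≤ (KP ∪ KQ).ncard := Set.ncard_le_ncard hunion (hKPfin.union hKQfin)
          _ ≤ KP.ncard + KQ.ncard := Set.ncard_union_le _ _
      rcases le_or_gt n KP.ncard with hnP | hnP
      · left
        refine combine n hn T τ P hKPfin.toFinset ?_ ?_
        · rwa [Set.ncard_eq_toFinset_card KP hKPfin] at hnP
        · intro k hk
          exact ((Set.Finite.mem_toFinset hKPfin).1 hk).2
      · right
        have hnQ : n ≤ KQ.ncard := by omega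
        refine combine n hn T τ Q hKQfin.toFinset ?_ ?_
        · rwa [Set.ncard_eq_toFinset_card KQ hKQfin] at hnQ
        · intro k hk
          exact ((Set.Finite.mem_toFinset hKQfin).1 hk).2

lemma split_lemma (n : ℕ) (hn : 1 ≤ n) (T : Finset (List ℕ)) (α : List ℕ)
    (hgood : GoodFrom (2 * n) T α) (P Q : Set (List ℕ)) (hcov : ↑T ⊆ P ∪ Q) :
    (∃ S ⊆ T, GoodFromFor n S α P) ∨ (∃ S ⊆ T, GoodFromFor n S α Q) := by
  obtain ⟨ρ, hρ⟩ := hgood.1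
  exact rich_lemma n hn T α hgood P Q hcov (T.sup List.length) α (Nat.le_add_left _ _)
    List.prefix_rfl ⟨ρ, hρ, hgood.2.1 ρ hρ⟩

lemma aux_main : ∀ a : ℕ, 1 ≤ a → ∀ n : ℕ, 1 ≤ n → ∀ T : Finset (List ℕ), ∀ α : List ℕ,
    GoodFrom (2 ^ (a - 1) * n) T α → ∀ P : Fin a → Set (List ℕ), ↑T ⊆ ⋃ i, P i →
    ∃ i : Fin a, ∃ S ⊆ T, GoodFromFor n S α (P i) := by
  intro a
  induction a with
  | zero => omega
  | succ a iha =>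
    intro _ n hn T α hgood P hcov
    rcases Nat.eq_zero_or_pos a with rfl | ha
    · -- base case: one set
      refine ⟨0, T, subset_rfl, by simpa using hgood, ?_⟩
      intro ρ hρ
      obtain ⟨s, ⟨i, rfl⟩, hs⟩ := hcov hρ
      have : i = 0 := Fin.fin_one_eq_zero i
      rwa [← this]
    · have h2 : 2 ^ (a + 1 - 1) * n = 2 * (2 ^ (a - 1) * n) := by
        rw [← mul_assoc, ← pow_succ']
        congr 2
        omega
      rw [h2] at hgood
      have hn' : 1 ≤ 2 ^ (a - 1) * n := Nat.one_le_iff_ne_zero.2 (by positivity)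
      have hcov' : ↑T ⊆ P (Fin.last a) ∪ ⋃ i : Fin a, P i.castSucc := by
        intro ρ hρ
        obtain ⟨s, ⟨i, rfl⟩, hs⟩ := hcov hρ
        rcases Fin.eq_castSucc_or_eq_last i with ⟨j, rfl⟩ | rfl
        · exact Or.inr (Set.mem_iUnion.2 ⟨j, hs⟩)
        · exact Or.inl hs
      rcases split_lemma (2 ^ (a - 1) * n) hn' T α hgood _ _ hcov' with
        ⟨S, hST, hSg, hSP⟩ | ⟨S, hST, hSg, hSQ⟩
      · refine ⟨Fin.last a, S, hST, goodFrom_mono ?_ hSg, hSP⟩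
        calc n = 1 * n := (one_mul n).symm
          _ ≤ 2 ^ (a - 1) * n := Nat.mul_le_mul_right n (Nat.one_le_two_pow)
      · obtain ⟨i, S', hS'S, hgf⟩ := iha ha n hn S α hSg (fun i => P i.castSucc) hSQ
        exact ⟨i.castSucc, S', hS'S.trans hST, hgf⟩

/-- If `T` is `2^(a−1)·n`-good from `α` and `T ⊆ P_1 ∪ ⋯ ∪ P_a`, then for some `i`,
`T` has a subset which is `n`-good from `α` for `P_i`. -/
theorem good_subset_of_cover (a n : ℕ) (ha : 1 ≤ a) (hn : 1 ≤ n)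
    (T : Finset (List ℕ)) (hT : IsTree T) (α : List ℕ)
    (hgood : GoodFrom (2 ^ (a - 1) * n) T α)
    (P : Fin a → Set (List ℕ)) (hcov : ↑T ⊆ ⋃ i, P i) :
    ∃ i : Fin a, ∃ S ⊆ T, GoodFromFor n S α (P i) :=
  aux_main a ha n hn T α hgood P hcov
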